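/- Let Q be a polynomial in the ring R = ℂ[xE4, xE6, xa2, xa3, xa4, xb1, xb2, xb3, xb4, xb5, xb6] that is bihomogeneous with respect to the (weight, index) bigrading, i.e., every monomial appearing in Q has the same total weight and the same total index, where the bidegrees of the variables are: xE4 ↦ (4, 0), xE6 ↦ (6, 0), xa2 ↦ (−8, 2), xa3 ↦ (−14, 3), xa4 ↦ (−20, 4), xb1 ↦ (0, 1), xb2 ↦ (−6, 2), xb3 ↦ (−12, 3), xb4 ↦ (−18, 4), xb5 ↦ (−24, 5), xb6 ↦ (−30, 6). Let φ : R → ℂ[w1, ..., w8] be the ℂ-algebra homomorphism determined by φ(xE4) = 1, φ(xE6) = 1, φ(xb1) = −4, φ(xa2) = a2_0, φ(xa3) = a3_0, φ(xa4) = a4_0, φ(xb2) = b2_0, φ(xb3) = b3_0, φ(xb4) = b4_0, φ(xb5) = b5_0, φ(xb6) = b6_0. If φ(Q) = 0, then the polynomial xE4^3 − xE6^2 divides Q in R. -/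

import Mathlib

noncomputable section

namespace E8JacobiQ0

open MvPolynomial

/-- The polynomial ring `ℂ[w1, ..., w8]`; the variable `wⱼ` is `X (j-1)`. -/
abbrev Cw : Type := MvPolynomial (Fin 8) ℂ

def w1 : Cw := X 0
def w2 : Cw := X 1
def w3 : Cw := X 2
def w4 : Cw := X 3
def w5 : Cw := X 4
def w6 : Cw := X 5
def w7 : Cw := X 6
def w8 : Cw := X 7

def a2_0 : Cw := C (-(2/3) : ℂ) * w1 + 12 * w8 - 1440
def a3_0 : Cw := -2 * w2 + 96 * w1 - 1152 * w8 + 103680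
def a4_0 : Cw := C ((4/3) : ℂ) * w1^2 - 4 * w3 - 16 * w6 - 48 * w1 * w8
  - 144 * w8^2 + 400 * w2 + 1440 * w7 + 1728 * w1 + 41472 * w8 - 2073600
def b2_0 : Cw := C (-(1/18) : ℂ) * w1 - 3 * w8 + 840
def b3_0 : Cw := C (-(1/6) : ℂ) * w2 - 4 * w7 - 8 * w1 + 528 * w8 - 79680
def b4_0 : Cw := C ((2/9) : ℂ) * w1^2 - C ((1/3) : ℂ) * w3 - C ((16/3) : ℂ) * w6
  - 24 * w1 * w8 - 120 * w8^2 + C ((424/3) : ℂ) * w2 + 1272 * w7 + 4608 * w1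
  - 25920 * w8 + 3939840
def b5_0 : Cw := C ((2/3) : ℂ) * w1 * w2 - 4 * w5 - 16 * w1 * w7 + 64 * w2 * w8
  + 288 * w7 * w8 - 96 * w1^2 - 60 * w3 - 160 * w6 + 3456 * w8^2 + 800 * w2
  - 24480 * w7 - 108480 * w1 + 933120 * w8 - 97873920
def b6_0 : Cw := C (-(8/27) : ℂ) * w1^3 + w2^2 + C ((4/3) : ℂ) * w1 * w3 - 4 * w4
  - C ((32/3) : ℂ) * w1 * w6 - 48 * w1^2 * w8 + 48 * w2 * w7 + 288 * w7^2
  - 40 * w3 * w8 - 480 * w6 * w8 - 2592 * w1 * w8^2 - 9792 * w8^3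
  + C ((1124/3) : ℂ) * w1 * w2 + 548 * w5 + 6688 * w1 * w7 + 1884 * w2 * w8
  + 25632 * w7 * w8 + 24576 * w1^2 + 12920 * w3 + 88320 * w6
  + 578688 * w1 * w8 + 1714176 * w8^2 - 1694400 * w2 - 8460000 * w7
  - 30102720 * w1 - 104198400 * w8 + 721612800

/-- The polynomial ring `R = ℂ[xE4, xE6, xa2, xa3, xa4, xb1, xb2, xb3, xb4, xb5, xb6]`,
with variables in that order. -/
abbrev R : Type := MvPolynomial (Fin 11) ℂ

/-- The (weight, index) bidegrees of the variables
`xE4, xE6, xa2, xa3, xa4, xb1, xb2, xb3, xb4, xb5, xb6`. -/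
def bideg : Fin 11 → ℤ × ℤ :=
  ![(4, 0), (6, 0), (-8, 2), (-14, 3), (-20, 4), (0, 1),
    (-6, 2), (-12, 3), (-18, 4), (-24, 5), (-30, 6)]

/-- The ℂ-algebra homomorphism `φ : R → ℂ[w1, ..., w8]` sending `xE4 ↦ 1`, `xE6 ↦ 1`,
`xa2 ↦ a2_0`, `xa3 ↦ a3_0`, `xa4 ↦ a4_0`, `xb1 ↦ −4`, `xb2 ↦ b2_0`, `xb3 ↦ b3_0`,
`xb4 ↦ b4_0`, `xb5 ↦ b5_0`, `xb6 ↦ b6_0`. -/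
def φ : R →ₐ[ℂ] Cw :=
  MvPolynomial.aeval
    ![1, 1, a2_0, a3_0, a4_0, -4, b2_0, b3_0, b4_0, b5_0, b6_0]

def g1 : R :=
  C (-(9 : ℂ)/8) * X 2
    + C (-(9 : ℂ)/2) * X 6
    + C (2160 : ℂ)

def g2 : R :=
  C (-66 : ℂ) * X 2
    + C (-(1 : ℂ)/2) * X 3
    + C (-72 : ℂ) * X 6
    + C (17280 : ℂ)

def g3 : R :=
  C ((1 : ℂ)/8) * X 2 ^ 2
    + C (3 : ℂ) * X 2 * X 6
    + C (-2406 : ℂ) * X 2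
    + C (-(25 : ℂ)/2) * X 3
    + C (-(1 : ℂ)/3) * X 4
    + C (18 : ℂ) * X 6 ^ 2
    + C (-504 : ℂ) * X 6
    + C (198 : ℂ) * X 7
    + C (1 : ℂ) * X 8
    + C (69120 : ℂ)

def g4 : R :=
  C ((31 : ℂ)/384) * X 2 ^ 3
    + C ((35 : ℂ)/32) * X 2 ^ 2 * X 6
    + C (-(6975 : ℂ)/8) * X 2 ^ 2
    + C (-(115 : ℂ)/96) * X 2 * X 3
    + C ((59 : ℂ)/288) * X 2 * X 4
    + C ((75 : ℂ)/8) * X 2 * X 6 ^ 2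
    + C (-4305 : ℂ) * X 2 * X 6
    + C (-(9 : ℂ)/8) * X 2 * X 7
    + C (-(17 : ℂ)/24) * X 2 * X 8
    + C (-286650 : ℂ) * X 2
    + C (-(1 : ℂ)/32) * X 3 ^ 2
    + C ((1123 : ℂ)/8) * X 3 * X 6
    + C ((3 : ℂ)/4) * X 3 * X 7
    + C (-(112035 : ℂ)/2) * X 3
    + C ((13 : ℂ)/24) * X 4 * X 6
    + C (-(1235 : ℂ)/6) * X 4
    + C ((45 : ℂ)/2) * X 6 ^ 3
    + C (5130 : ℂ) * X 6 ^ 2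
    + C ((855 : ℂ)/2) * X 6 * X 7
    + C (-(19 : ℂ)/2) * X 6 * X 8
    + C (-7560 : ℂ) * X 6
    + C ((9 : ℂ)/2) * X 7 ^ 2
    + C (54450 : ℂ) * X 7
    + C (3985 : ℂ) * X 8
    + C (-(137 : ℂ)/4) * X 9
    + C (-(1 : ℂ)/4) * X 10
    + C (483840 : ℂ)

def g5 : R :=
  C (-(5 : ℂ)/8) * X 2 ^ 2
    + C ((5 : ℂ)/96) * X 2 * X 3
    + C (-105 : ℂ) * X 2 * X 6
    + C (-(3 : ℂ)/2) * X 2 * X 7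
    + C (-21750 : ℂ) * X 2
    + C ((19 : ℂ)/8) * X 3 * X 6
    + C (-1660 : ℂ) * X 3
    + C ((25 : ℂ)/6) * X 4
    + C (-90 : ℂ) * X 6 ^ 2
    + C (-2520 : ℂ) * X 6
    + C (-720 : ℂ) * X 7
    + C (-5 : ℂ) * X 8
    + C (-(1 : ℂ)/4) * X 9
    + C (241920 : ℂ)

def g6 : R :=
  C ((9 : ℂ)/64) * X 2 ^ 2
    + C (-(3 : ℂ)/8) * X 2 * X 6
    + C (-(477 : ℂ)/2) * X 2
    + C (-(15 : ℂ)/2) * X 3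
    + C ((1 : ℂ)/48) * X 4
    + C (-(27 : ℂ)/4) * X 6 ^ 2
    + C (-378 : ℂ) * X 6
    + C (-72 : ℂ) * X 7
    + C (-(1 : ℂ)/4) * X 8
    + C (60480 : ℂ)

def g7 : R :=
  C ((31 : ℂ)/4) * X 2
    + C ((1 : ℂ)/48) * X 3
    + C (-21 : ℂ) * X 6
    + C (-(1 : ℂ)/4) * X 7
    + C (6720 : ℂ)

def g8 : R :=
  C ((1 : ℂ)/48) * X 2
    + C (-(1 : ℂ)/4) * X 6
    + C (240 : ℂ)

def gv : Fin 8 → R := ![g1, g2, g3, g4, g5, g6, g7, g8]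
@[simp] lemma gv0 : gv 0 = g1 := rfl
@[simp] lemma gv1 : gv 1 = g2 := rfl
@[simp] lemma gv2 : gv 2 = g3 := rfl
@[simp] lemma gv3 : gv 3 = g4 := rfl
@[simp] lemma gv4 : gv 4 = g5 := rfl
@[simp] lemma gv5 : gv 5 = g6 := rfl
@[simp] lemma gv6 : gv 6 = g7 := rfl
@[simp] lemma gv7 : gv 7 = g8 := rfl

def psi : Cw →ₐ[ℂ] R := aeval gv

def uv : Fin 11 → R := ![1, 1, X 2, X 3, X 4, -4, X 6, X 7, X 8, X 9, X 10]

def pih : R →ₐ[ℂ] R := aeval uv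

lemma psi_a2_0 : psi a2_0 = X 2 := by
  apply MvPolynomial.funext; intro x
  simp only [psi, a2_0, w1, w2, w3, w4, w5, w6, w7, w8, map_add, map_sub, map_mul, map_neg,
    map_ofNat, map_one, map_pow, aeval_X, aeval_C, algebraMap_eq,
    gv0, gv1, gv2, gv3, gv4, gv5, gv6, gv7, g1, g2, g3, g4, g5, g6, g7, g8]
  simp only [eval_add, eval_sub, eval_mul, eval_pow, eval_C, eval_X, eval_ofNat]
  ring

lemma psi_a3_0 : psi a3_0 = X 3 := by
  apply MvPolynomial.funext; intro x
  simp only [psi, a3_0, w1, w2, w3, w4, w5, w6, w7, w8, map_add, map_sub, map_mul, map_neg,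
    map_ofNat, map_one, map_pow, aeval_X, aeval_C, algebraMap_eq,
    gv0, gv1, gv2, gv3, gv4, gv5, gv6, gv7, g1, g2, g3, g4, g5, g6, g7, g8]
  simp only [eval_add, eval_sub, eval_mul, eval_pow, eval_C, eval_X, eval_ofNat]
  ring

lemma psi_a4_0 : psi a4_0 = X 4 := by
  apply MvPolynomial.funext; intro x
  simp only [psi, a4_0, w1, w2, w3, w4, w5, w6, w7, w8, map_add, map_sub, map_mul, map_neg,
    map_ofNat, map_one, map_pow, aeval_X, aeval_C, algebraMap_eq,
    gv0, gv1, gv2, gv3, gv4, gv5, gv6, gv7, g1, g2, g3, g4, g5, g6, g7, g8]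
  simp only [eval_add, eval_sub, eval_mul, eval_pow, eval_C, eval_X, eval_ofNat]
  ring

lemma psi_b2_0 : psi b2_0 = X 6 := by
  apply MvPolynomial.funext; intro x
  simp only [psi, b2_0, w1, w2, w3, w4, w5, w6, w7, w8, map_add, map_sub, map_mul, map_neg,
    map_ofNat, map_one, map_pow, aeval_X, aeval_C, algebraMap_eq,
    gv0, gv1, gv2, gv3, gv4, gv5, gv6, gv7, g1, g2, g3, g4, g5, g6, g7, g8]
  simp only [eval_add, eval_sub, eval_mul, eval_pow, eval_C, eval_X, eval_ofNat]
  ring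

lemma psi_b3_0 : psi b3_0 = X 7 := by
  apply MvPolynomial.funext; intro x
  simp only [psi, b3_0, w1, w2, w3, w4, w5, w6, w7, w8, map_add, map_sub, map_mul, map_neg,
    map_ofNat, map_one, map_pow, aeval_X, aeval_C, algebraMap_eq,
    gv0, gv1, gv2, gv3, gv4, gv5, gv6, gv7, g1, g2, g3, g4, g5, g6, g7, g8]
  simp only [eval_add, eval_sub, eval_mul, eval_pow, eval_C, eval_X, eval_ofNat]
  ring

lemma psi_b4_0 : psi b4_0 = X 8 := by
  apply MvPolynomial.funext; intro x
  simp only [psi, b4_0, w1, w2, w3, w4, w5, w6, w7, w8, map_add, map_sub, map_mul, map_neg,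
    map_ofNat, map_one, map_pow, aeval_X, aeval_C, algebraMap_eq,
    gv0, gv1, gv2, gv3, gv4, gv5, gv6, gv7, g1, g2, g3, g4, g5, g6, g7, g8]
  simp only [eval_add, eval_sub, eval_mul, eval_pow, eval_C, eval_X, eval_ofNat]
  ring

lemma psi_b5_0 : psi b5_0 = X 9 := by
  apply MvPolynomial.funext; intro x
  simp only [psi, b5_0, w1, w2, w3, w4, w5, w6, w7, w8, map_add, map_sub, map_mul, map_neg,
    map_ofNat, map_one, map_pow, aeval_X, aeval_C, algebraMap_eq,
    gv0, gv1, gv2, gv3, gv4, gv5, gv6, gv7, g1, g2, g3, g4, g5, g6, g7, g8]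
  simp only [eval_add, eval_sub, eval_mul, eval_pow, eval_C, eval_X, eval_ofNat]
  ring

lemma psi_b6_0 : psi b6_0 = X 10 := by
  apply MvPolynomial.funext; intro x
  simp only [psi, b6_0, w1, w2, w3, w4, w5, w6, w7, w8, map_add, map_sub, map_mul, map_neg,
    map_ofNat, map_one, map_pow, aeval_X, aeval_C, algebraMap_eq,
    gv0, gv1, gv2, gv3, gv4, gv5, gv6, gv7, g1, g2, g3, g4, g5, g6, g7, g8]
  simp only [eval_add, eval_sub, eval_mul, eval_pow, eval_C, eval_X, eval_ofNat]
  ring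

lemma pihX0 : pih (X 0) = 1 := by
  show aeval uv (X 0) = 1
  rw [aeval_X]
  rfl

lemma pihX1 : pih (X 1) = 1 := by
  show aeval uv (X 1) = 1
  rw [aeval_X]
  rfl

lemma pihX2 : pih (X 2) = X 2 := by
  show aeval uv (X 2) = X 2
  rw [aeval_X]
  rfl

lemma pihX3 : pih (X 3) = X 3 := by
  show aeval uv (X 3) = X 3
  rw [aeval_X]
  rfl

lemma pihX4 : pih (X 4) = X 4 := by
  show aeval uv (X 4) = X 4
  rw [aeval_X]
  rfl

lemma pihX5 : pih (X 5) = -4 := by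
  show aeval uv (X 5) = -4
  rw [aeval_X]
  rfl

lemma pihX6 : pih (X 6) = X 6 := by
  show aeval uv (X 6) = X 6
  rw [aeval_X]
  rfl

lemma pihX7 : pih (X 7) = X 7 := by
  show aeval uv (X 7) = X 7
  rw [aeval_X]
  rfl

lemma pihX8 : pih (X 8) = X 8 := by
  show aeval uv (X 8) = X 8
  rw [aeval_X]
  rfl

lemma pihX9 : pih (X 9) = X 9 := by
  show aeval uv (X 9) = X 9
  rw [aeval_X]
  rfl

lemma pihX10 : pih (X 10) = X 10 := by
  show aeval uv (X 10) = X 10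
  rw [aeval_X]
  rfl

lemma phiX0 : φ (X 0) = 1 := by
  show aeval _ (X 0) = 1
  rw [aeval_X]
  rfl

lemma phiX1 : φ (X 1) = 1 := by
  show aeval _ (X 1) = 1
  rw [aeval_X]
  rfl

lemma phiX2 : φ (X 2) = a2_0 := by
  show aeval _ (X 2) = a2_0
  rw [aeval_X]
  rfl

lemma phiX3 : φ (X 3) = a3_0 := by
  show aeval _ (X 3) = a3_0
  rw [aeval_X]
  rfl

lemma phiX4 : φ (X 4) = a4_0 := by
  show aeval _ (X 4) = a4_0
  rw [aeval_X]
  rfl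

lemma phiX5 : φ (X 5) = -4 := by
  show aeval _ (X 5) = -4
  rw [aeval_X]
  rfl

lemma phiX6 : φ (X 6) = b2_0 := by
  show aeval _ (X 6) = b2_0
  rw [aeval_X]
  rfl

lemma phiX7 : φ (X 7) = b3_0 := by
  show aeval _ (X 7) = b3_0
  rw [aeval_X]
  rfl

lemma phiX8 : φ (X 8) = b4_0 := by
  show aeval _ (X 8) = b4_0
  rw [aeval_X]
  rfl

lemma phiX9 : φ (X 9) = b5_0 := by
  show aeval _ (X 9) = b5_0
  rw [aeval_X]
  rfl

lemma phiX10 : φ (X 10) = b6_0 := by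
  show aeval _ (X 10) = b6_0
  rw [aeval_X]
  rfl

lemma hcomp : psi.comp φ = pih := by
  apply algHom_ext
  intro i
  fin_cases i
  · show psi (φ (X 0)) = pih (X 0)
    rw [phiX0, map_one, pihX0]
  · show psi (φ (X 1)) = pih (X 1)
    rw [phiX1, map_one, pihX1]
  · show psi (φ (X 2)) = pih (X 2)
    rw [phiX2, psi_a2_0, pihX2]
  · show psi (φ (X 3)) = pih (X 3)
    rw [phiX3, psi_a3_0, pihX3]
  · show psi (φ (X 4)) = pih (X 4)
    rw [phiX4, psi_a4_0, pihX4]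
  · show psi (φ (X 5)) = pih (X 5)
    rw [phiX5, map_neg, map_ofNat, pihX5]
  · show psi (φ (X 6)) = pih (X 6)
    rw [phiX6, psi_b2_0, pihX6]
  · show psi (φ (X 7)) = pih (X 7)
    rw [phiX7, psi_b3_0, pihX7]
  · show psi (φ (X 8)) = pih (X 8)
    rw [phiX8, psi_b4_0, pihX8]
  · show psi (φ (X 9)) = pih (X 9)
    rw [phiX9, psi_b5_0, pihX9]
  · show psi (φ (X 10)) = pih (X 10)
    rw [phiX10, psi_b6_0, pihX10]

lemma uv_eq_X (i : Fin 11) (h0 : i ≠ 0) (h1 : i ≠ 1) (h5 : i ≠ 5) : uv i = X i := by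
  fin_cases i
  · exact absurd rfl h0
  · exact absurd rfl h1
  · rfl
  · rfl
  · rfl
  · exact absurd rfl h5
  · rfl
  · rfl
  · rfl
  · rfl
  · rfl

/-- kill the exponents of the variables `0`, `1`, `5`. -/
def τe (d : Fin 11 →₀ ℕ) : Fin 11 →₀ ℕ :=
  Finsupp.equivFunOnFinite.symm fun i => if i = 0 ∨ i = 1 ∨ i = 5 then 0 else d i

/-- reduce the exponent of `X 1` mod 2, transferring to `X 0`. -/
def ρe (d : Fin 11 →₀ ℕ) : Fin 11 →₀ ℕ :=
  Finsupp.equivFunOnFinite.symm fun i =>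
    if i = 0 then d 0 + 3 * (d 1 / 2) else if i = 1 then d 1 % 2 else d i

lemma τe_apply (d : Fin 11 →₀ ℕ) (i : Fin 11) :
    τe d i = if i = 0 ∨ i = 1 ∨ i = 5 then 0 else d i := rfl

lemma ρe_apply (d : Fin 11 →₀ ℕ) (i : Fin 11) :
    ρe d i = if i = 0 then d 0 + 3 * (d 1 / 2) else if i = 1 then d 1 % 2 else d i := rfl

lemma sum_univ_eleven {M : Type*} [AddCommMonoid M] (f : Fin 11 → M) :
    ∑ i, f i = f 0 + f 1 + f 2 + f 3 + f 4 + f 5 + f 6 + f 7 + f 8 + f 9 + f 10 := by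
  rw [Fin.sum_univ_castSucc, Fin.sum_univ_castSucc, Fin.sum_univ_castSucc, Fin.sum_univ_eight]
  rfl

lemma weight_eq (d : Fin 11 →₀ ℕ) :
    Finsupp.weight bideg d =
      (4 * (d 0 : ℤ) + 6 * (d 1 : ℤ) - 8 * (d 2 : ℤ) - 14 * (d 3 : ℤ) - 20 * (d 4 : ℤ)
        - 6 * (d 6 : ℤ) - 12 * (d 7 : ℤ) - 18 * (d 8 : ℤ) - 24 * (d 9 : ℤ) - 30 * (d 10 : ℤ),
       2 * (d 2 : ℤ) + 3 * (d 3 : ℤ) + 4 * (d 4 : ℤ) + (d 5 : ℤ) + 2 * (d 6 : ℤ)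
        + 3 * (d 7 : ℤ) + 4 * (d 8 : ℤ) + 5 * (d 9 : ℤ) + 6 * (d 10 : ℤ)) := by
  rw [Finsupp.weight_apply, Finsupp.sum_fintype _ _ (fun i => zero_smul ℕ (bideg i)),
    sum_univ_eleven]
  show d 0 • ((4 : ℤ), (0 : ℤ)) + d 1 • ((6 : ℤ), (0 : ℤ)) + d 2 • ((-8 : ℤ), (2 : ℤ))
      + d 3 • ((-14 : ℤ), (3 : ℤ)) + d 4 • ((-20 : ℤ), (4 : ℤ)) + d 5 • ((0 : ℤ), (1 : ℤ))
      + d 6 • ((-6 : ℤ), (2 : ℤ)) + d 7 • ((-12 : ℤ), (3 : ℤ)) + d 8 • ((-18 : ℤ), (4 : ℤ))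
      + d 9 • ((-24 : ℤ), (5 : ℤ)) + d 10 • ((-30 : ℤ), (6 : ℤ)) = _
  simp only [Prod.smul_mk, Prod.mk_add_mk, Prod.mk.injEq, smul_eq_mul, nsmul_eq_mul]
  constructor <;> ring

lemma pih_fix (e : Fin 11 →₀ ℕ) (h0 : e 0 = 0) (h1 : e 1 = 0) (h5 : e 5 = 0) (c : ℂ) :
    pih (monomial e c) = monomial e c := by
  show aeval uv (monomial e c) = monomial e c
  rw [aeval_monomial, algebraMap_eq, monomial_eq]
  congr 1
  apply Finsupp.prod_congr
  intro i hi
  have hi' := Finsupp.mem_support_iff.mp hi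
  have hn0 : i ≠ 0 := by rintro rfl; exact hi' h0
  have hn1 : i ≠ 1 := by rintro rfl; exact hi' h1
  have hn5 : i ≠ 5 := by rintro rfl; exact hi' h5
  rw [uv_eq_X i hn0 hn1 hn5]

lemma pih_monomial (d : Fin 11 →₀ ℕ) (c : ℂ) :
    pih (monomial d c) = monomial (τe d) ((-4 : ℂ) ^ (d 5) * c) := by
  have hsplit : d = τe d + Finsupp.single 0 (d 0) + Finsupp.single 1 (d 1)
      + Finsupp.single 5 (d 5) := by
    ext i
    simp only [Finsupp.add_apply, Finsupp.single_apply, τe_apply]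
    fin_cases i <;> simp
  have hd : monomial d c
      = monomial (τe d) c * X 0 ^ (d 0) * X 1 ^ (d 1) * X 5 ^ (d 5) := by
    rw [X_pow_eq_monomial, X_pow_eq_monomial, X_pow_eq_monomial, monomial_mul, monomial_mul,
      monomial_mul, mul_one, mul_one, mul_one, ← hsplit]
  rw [hd, map_mul, map_mul, map_mul, map_pow, map_pow, map_pow, pihX0, pihX1, pihX5,
    pih_fix _ (by simp [τe_apply]) (by simp [τe_apply]) (by simp [τe_apply]),
    one_pow, one_pow, mul_one, mul_one]
  rw [show ((-4 : R)) = C ((-4 : ℂ)) by rw [map_neg, map_ofNat], ← map_pow, mul_comm,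
    C_mul_monomial]

lemma key_dvd (d : Fin 11 →₀ ℕ) (a : ℂ) :
    (X 0 ^ 3 - X 1 ^ 2 : R) ∣ monomial d a - monomial (ρe d) a := by
  set t := d 1 / 2 with ht
  set b : Fin 11 →₀ ℕ := Finsupp.equivFunOnFinite.symm fun i => if i = 1 then d 1 % 2 else d i
    with hb
  have hbap : ∀ i, b i = if i = 1 then d 1 % 2 else d i := fun i => rfl
  have hd : d = b + Finsupp.single 1 (2 * t) := by
    ext i
    simp only [Finsupp.add_apply, Finsupp.single_apply, hbap]
    fin_cases i <;> simp
    omega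
  have hρ : ρe d = b + Finsupp.single 0 (3 * t) := by
    ext i
    simp only [Finsupp.add_apply, Finsupp.single_apply, hbap, ρe_apply]
    fin_cases i <;> simp
    exact ht.symm
  have h1 : monomial d a = monomial b a * ((X 1 : R) ^ 2) ^ t := by
    rw [← pow_mul, X_pow_eq_monomial, monomial_mul, mul_one, ← hd]
  have h2 : monomial (ρe d) a = monomial b a * ((X 0 : R) ^ 3) ^ t := by
    rw [← pow_mul, X_pow_eq_monomial, monomial_mul, mul_one, ← hρ]
  rw [h1, h2, ← mul_sub]
  have hdvd : (X 0 ^ 3 - X 1 ^ 2 : R) ∣ ((X 1 : R) ^ 2) ^ t - ((X 0 : R) ^ 3) ^ t := by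
    rw [show (X 0 ^ 3 - X 1 ^ 2 : R) = -((X 1 : R) ^ 2 - (X 0 : R) ^ 3) by ring, neg_dvd]
    exact sub_dvd_pow_sub_pow _ _ t
  exact hdvd.mul_left _

lemma fiber_eq {Q : R} {km : ℤ × ℤ} (hhom : Q.IsWeightedHomogeneous bideg km)
    {d d' : Fin 11 →₀ ℕ} (hd : d ∈ Q.support) (hd' : d' ∈ Q.support)
    (hτ : τe d = τe d') : d 5 = d' 5 ∧ ρe d = ρe d' := by
  have h := fun i => DFunLike.congr_fun hτ i
  have h2 := h 2; have h3 := h 3; have h4 := h 4; have h6 := h 6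
  have h7 := h 7; have h8 := h 8; have h9 := h 9; have h10 := h 10
  simp only [τe_apply] at h2 h3 h4 h6 h7 h8 h9 h10
  simp at h2 h3 h4 h6 h7 h8 h9 h10
  have hw := hhom (MvPolynomial.mem_support_iff.mp hd)
  have hw' := hhom (MvPolynomial.mem_support_iff.mp hd')
  rw [weight_eq] at hw hw'
  have hww := hw.trans hw'.symm
  rw [Prod.mk.injEq] at hww
  obtain ⟨hW, hI⟩ := hww
  have h5 : d 5 = d' 5 := by omega
  refine ⟨h5, ?_⟩
  ext i
  fin_cases i <;> simp [ρe_apply] <;> omega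

lemma fiber_rev {d d' : Fin 11 →₀ ℕ} (hρ : ρe d = ρe d') : τe d = τe d' ∧ d 5 = d' 5 := by
  have h := fun i => DFunLike.congr_fun hρ i
  have h2 := h 2; have h3 := h 3; have h4 := h 4; have h5 := h 5; have h6 := h 6
  have h7 := h 7; have h8 := h 8; have h9 := h 9; have h10 := h 10
  simp only [ρe_apply] at h2 h3 h4 h5 h6 h7 h8 h9 h10
  simp at h2 h3 h4 h5 h6 h7 h8 h9 h10
  refine ⟨?_, h5⟩
  ext i
  fin_cases i <;> simp [τe_apply] <;> omega

theorem dvd_of_bihomogeneous_relation (Q : R)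
    (hbihom : ∃ km : ℤ × ℤ, Q.IsWeightedHomogeneous bideg km)
    (hker : φ Q = 0) :
    (MvPolynomial.X 0 ^ 3 - MvPolynomial.X 1 ^ 2 : R) ∣ Q := by
  obtain ⟨km, hhom⟩ := hbihom
  set Q' : R := ∑ d ∈ Q.support, monomial (ρe d) (coeff d Q) with hQ'def
  have hQsum : Q = ∑ d ∈ Q.support, monomial d (coeff d Q) := (support_sum_monomial_coeff Q).symm
  have hdvd : (X 0 ^ 3 - X 1 ^ 2 : R) ∣ Q - Q' := by
    have hsub : Q - Q'
        = ∑ d ∈ Q.support, (monomial d (coeff d Q) - monomial (ρe d) (coeff d Q)) := by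
      rw [Finset.sum_sub_distrib, ← hQsum]
    rw [hsub]
    exact Finset.dvd_sum fun d _ => key_dvd d (coeff d Q)
  have hπQ : pih Q = 0 := by
    have h : pih Q = psi (φ Q) := by rw [← hcomp]; rfl
    rw [h, hker, map_zero]
  have hQ'0 : Q' = 0 := by
    apply MvPolynomial.ext
    intro e
    rw [coeff_zero]
    have hce : coeff e Q' = ∑ d ∈ Q.support, if ρe d = e then coeff d Q else 0 := by
      rw [hQ'def, coeff_sum]
      exact Finset.sum_congr rfl fun d _ => coeff_monomial _ _ _
    by_cases hex : ∃ d₀ ∈ Q.support, ρe d₀ = e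
    · obtain ⟨d₀, hs₀, he₀⟩ := hex
      have hkey : coeff (τe d₀) (pih Q) = (-4 : ℂ) ^ (d₀ 5) * coeff e Q' := by
        conv_lhs => rw [hQsum]
        rw [map_sum, coeff_sum, hce, Finset.mul_sum]
        refine Finset.sum_congr rfl fun d hd => ?_
        rw [pih_monomial, coeff_monomial]
        by_cases h : τe d = τe d₀
        · obtain ⟨h5, hρ5⟩ := fiber_eq hhom hd hs₀ h
          rw [if_pos h, h5, mul_ite, mul_zero, if_pos (hρ5.trans he₀)]
        · have hne : ¬ ρe d = e := fun hc => h (fiber_rev (hc.trans he₀.symm)).1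
          rw [if_neg h, mul_ite, mul_zero, if_neg hne]
      rw [hπQ, coeff_zero] at hkey
      rcases mul_eq_zero.mp hkey.symm with h | h
      · exact absurd h (pow_ne_zero _ (by norm_num))
      · exact h
    · rw [hce]
      exact Finset.sum_eq_zero fun d hd => if_neg fun h => hex ⟨d, hd, h⟩
  rw [hQ'0, sub_zero] at hdvd
  exact hdvd

end E8JacobiQ0
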